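/- Let F be a field and let I be an infinite set. Then every F-algebra automorphism φ of M_∞(I,F) is a conjugation by an element of GL_rcf(I,F): there exists an invertible element x ∈ M_rcf(I,F) such that φ(a) = x⁻¹ a x for all a ∈ M_∞(I,F). -/

import Mathlib

/-- The product of two `I × I` matrices, defined via `finsum`; it is well defined
whenever one factor is finitary or both are row-and-column-finite. -/
noncomputable def matMul {F I : Type*} [Field F] (a b : Matrix I I F) : Matrix I I F :=
  fun i j => ∑ᶠ k, a i k * b k j

/-- A finitary matrix: only finitely many nonzero entries. -/
def IsFinitary {F I : Type*} [Field F] (a : Matrix I I F) : Prop :=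
  {p : I × I | a p.1 p.2 ≠ 0}.Finite

/-- A matrix has finitely many nonzero entries in each row and in each column. -/
def IsRcf {F I : Type*} [Field F] (a : Matrix I I F) : Prop :=
  (∀ i, {j | a i j ≠ 0}.Finite) ∧ (∀ j, {i | a i j ≠ 0}.Finite)

namespace Stmt14

variable {F I : Type*} [Field F] [DecidableEq I]

set_option linter.unusedSectionVars false

def E (i j : I) : Matrix I I F := fun m n => if m = i ∧ n = j then 1 else 0

lemma matMul_apply (a b : Matrix I I F) (m n : I) : matMul a b m n = ∑ᶠ k, a m k * b k n := rfl

lemma fin_E (i j : I) : IsFinitary (E i j : Matrix I I F) := by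
  apply Set.Finite.subset (Set.finite_singleton (i, j))
  rintro ⟨m, n⟩ h
  simp only [Set.mem_setOf_eq, E] at h
  by_cases h1 : m = i ∧ n = j
  · simp [h1.1, h1.2]
  · simp [h1] at h

lemma E_ne_zero (i j : I) : (E i j : Matrix I I F) ≠ 0 := by
  intro h
  have := congrFun (congrFun h i) j
  simp [E] at this

lemma fin_zero : IsFinitary (0 : Matrix I I F) := by
  apply Set.Finite.subset (Set.finite_empty)
  rintro ⟨m, n⟩ h
  simp at h

lemma fin_add {a b : Matrix I I F} (ha : IsFinitary a) (hb : IsFinitary b) :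
    IsFinitary (a + b) := by
  apply Set.Finite.subset (ha.union hb)
  rintro ⟨m, n⟩ h
  simp only [Set.mem_setOf_eq, Matrix.add_apply] at h
  by_contra hc
  simp only [Set.mem_union, Set.mem_setOf_eq, not_or, not_not] at hc
  rw [hc.1, hc.2, add_zero] at h; exact h rfl

lemma fin_smul {a : Matrix I I F} (c : F) (ha : IsFinitary a) : IsFinitary (c • a) := by
  apply Set.Finite.subset ha
  rintro ⟨m, n⟩ h
  simp only [Set.mem_setOf_eq, Matrix.smul_apply, smul_eq_mul] at h ⊢
  exact right_ne_zero_of_mul h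

lemma fin_sum {ι : Type*} (s : Finset ι) (g : ι → Matrix I I F) (hg : ∀ i, IsFinitary (g i)) :
    IsFinitary (∑ i ∈ s, g i) := by
  classical
  induction s using Finset.induction with
  | empty => simpa using fin_zero
  | insert _ _ hx ih => rw [Finset.sum_insert hx]; exact fin_add (hg _) ih

lemma row_fin {a : Matrix I I F} (ha : IsFinitary a) (m : I) : {k | a m k ≠ 0}.Finite :=
  (ha.image Prod.snd).subset (fun k hk => ⟨(m, k), hk, rfl⟩)

lemma col_fin {a : Matrix I I F} (ha : IsFinitary a) (n : I) : {k | a k n ≠ 0}.Finite :=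
  (ha.image Prod.fst).subset (fun k hk => ⟨(k, n), hk, rfl⟩)

lemma supp_mul_left {g h : I → F} (hg : {s | g s ≠ 0}.Finite) :
    (Function.support fun s => g s * h s).Finite :=
  hg.subset (fun _ hs => left_ne_zero_of_mul hs)

lemma supp_mul_right {g h : I → F} (hh : {s | h s ≠ 0}.Finite) :
    (Function.support fun s => g s * h s).Finite :=
  hh.subset (fun _ hs => right_ne_zero_of_mul hs)

lemma fin_matMul {a b : Matrix I I F} (ha : IsFinitary a) (hb : IsFinitary b) :
    IsFinitary (matMul a b) := by
  apply Set.Finite.subset ((ha.image Prod.fst).prod (hb.image Prod.snd))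
  rintro ⟨m, n⟩ h
  simp only [Set.mem_setOf_eq, matMul_apply] at h
  by_contra hc
  simp only [Set.mem_prod, Set.mem_image, Set.mem_setOf_eq, not_and_or] at hc
  apply h
  apply finsum_eq_zero_of_forall_eq_zero
  intro k
  rcases hc with hc | hc
  · have : a m k = 0 := by
      by_contra h'
      exact hc ⟨(m, k), h', rfl⟩
    rw [this, zero_mul]
  · have : b k n = 0 := by
      by_contra h'
      exact hc ⟨(k, n), h', rfl⟩
    rw [this, mul_zero]

lemma matMul_E_right (a : Matrix I I F) (k l m n : I) :
    matMul a (E k l) m n = if n = l then a m k else 0 := by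
  rw [matMul_apply, finsum_eq_single _ k]
  · by_cases h : n = l <;> simp [E, h]
  · intro t ht; simp [E, ht]

lemma matMul_E_left (a : Matrix I I F) (k l m n : I) :
    matMul (E k l) a m n = if m = k then a l n else 0 := by
  rw [matMul_apply, finsum_eq_single _ l]
  · by_cases h : m = k <;> simp [E, h]
  · intro t ht
    simp only [E]
    rw [if_neg (by tauto), zero_mul]

lemma matMul_E_E (i j k l : I) :
    matMul (E i j) (E k l) = if j = k then (E i l : Matrix I I F) else 0 := by
  funext m n
  rw [matMul_E_right]
  by_cases hjk : j = k
  · by_cases hmi : m = i <;> by_cases hnl : n = l <;> simp [E, hjk, hmi, hnl]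
  · by_cases hmi : m = i <;> by_cases hnl : n = l <;>
      simp [E, hjk, hmi, hnl, Ne.symm hjk]

lemma phi_sum {F I : Type*} [Field F] (φ : Matrix I I F → Matrix I I F)
    (hφ0 : φ 0 = 0)
    (hadd : ∀ a b, IsFinitary a → IsFinitary b → φ (a + b) = φ a + φ b)
    {ι : Type*} (s : Finset ι) (g : ι → Matrix I I F) (hg : ∀ i, IsFinitary (g i)) :
    φ (∑ i ∈ s, g i) = ∑ i ∈ s, φ (g i) := by
  classical
  induction s using Finset.induction with
  | empty => simpa using hφ0
  | insert _ _ hx ih =>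
    rw [Finset.sum_insert hx, Finset.sum_insert hx, hadd _ _ (hg _) (fin_sum _ _ hg), ih]

end Stmt14


open Stmt14

/-- Every `F`-algebra automorphism `φ` of `M_∞(I,F)` is conjugation by
an invertible element `x` of `M_rcf(I,F)`: `φ(a) = x⁻¹ * a * x` for all finitary `a`. -/
theorem stmt_14 (F I : Type*) [Field F] [Infinite I] [DecidableEq I]
    (φ : Matrix I I F → Matrix I I F)
    (hbij : Set.BijOn φ {a : Matrix I I F | IsFinitary a} {a : Matrix I I F | IsFinitary a})
    (hadd : ∀ a b, IsFinitary a → IsFinitary b → φ (a + b) = φ a + φ b)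
    (hsmul : ∀ (c : F) (a), IsFinitary a → φ (c • a) = c • φ a)
    (hmul : ∀ a b, IsFinitary a → IsFinitary b → φ (matMul a b) = matMul (φ a) (φ b)) :
    ∃ x xinv : Matrix I I F, IsRcf x ∧ IsRcf xinv ∧
      matMul x xinv = 1 ∧ matMul xinv x = 1 ∧
      ∀ a, IsFinitary a → φ a = matMul (matMul xinv a) x := by
  classical
  obtain ⟨o⟩ : Nonempty I := inferInstance
  have hmapsTo : ∀ a, IsFinitary a → IsFinitary (φ a) := fun a ha => hbij.mapsTo ha
  have hsurj : ∀ b, IsFinitary b → ∃ a, IsFinitary a ∧ φ a = b := by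
    intro b hb
    obtain ⟨a, ha, hab⟩ := hbij.surjOn hb
    exact ⟨a, ha, hab⟩
  have hφ0 : φ 0 = 0 := by
    have h := hadd 0 0 fin_zero fin_zero
    rw [add_zero] at h
    have h2 : φ 0 + 0 = φ 0 + φ 0 := by rw [add_zero]; exact h
    exact (add_left_cancel h2).symm
  -- f = φ (E o o) is a nonzero "rank one" idempotent
  set f : Matrix I I F := φ (E o o) with hf_def
  have hf_fin : IsFinitary f := hmapsTo _ (fin_E o o)
  have hf_ne : f ≠ 0 := by
    intro h
    exact E_ne_zero o o
      (hbij.injOn (fin_E o o) fin_zero (by rw [← hf_def, h, hφ0]))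
  obtain ⟨p, q, hpq⟩ : ∃ p q, f p q ≠ 0 := by
    by_contra h
    push_neg at h
    apply hf_ne
    funext m n
    rw [h m n]; rfl
  set c : F := (f p q)⁻¹ with hc
  have hmulE : ∀ i j k l : I, matMul (φ (E i j)) (φ (E k l)) =
      if j = k then φ (E i l) else 0 := by
    intro i j k l
    rw [← hmul _ _ (fin_E i j) (fin_E k l), matMul_E_E]
    split_ifs
    · rfl
    · exact hφ0
  -- rank one identity
  have hrank : ∀ m n, f m n * f p q = f m q * f p n := by
    obtain ⟨d, hd_fin, hφd⟩ := hsurj (E q p) (fin_E q p)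
    have hstep : matMul (matMul (E o o) d) (E o o) = d o o • (E o o : Matrix I I F) := by
      funext m n
      rw [matMul_E_right, matMul_E_left]
      by_cases h1 : m = o <;> by_cases h2 : n = o <;>
        simp [E, Matrix.smul_apply, h1, h2]
    have hφstep : φ (matMul (matMul (E o o) d) (E o o)) = matMul (matMul f (E q p)) f := by
      rw [hmul _ _ (fin_matMul (fin_E o o) hd_fin) (fin_E o o),
        hmul _ _ (fin_E o o) hd_fin, hφd, hf_def]
    have hφstep2 : φ (matMul (matMul (E o o) d) (E o o)) = d o o • f := by
      rw [hstep, hsmul _ _ (fin_E o o), hf_def]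
    have hentry : ∀ m n, f m q * f p n = d o o * f m n := by
      intro m n
      have h := congrFun (congrFun (hφstep.symm.trans hφstep2) m) n
      have hL : matMul (matMul f (E q p)) f m n = f m q * f p n := by
        rw [matMul_apply, finsum_eq_single _ p]
        · rw [matMul_E_right, if_pos rfl]
        · intro t ht; rw [matMul_E_right, if_neg ht, zero_mul]
      rw [hL, Matrix.smul_apply, smul_eq_mul] at h
      exact h
    have hd00 : d o o = f p q := by
      have h := hentry p q
      exact (mul_right_cancel₀ hpq h.symm)
    intro m n
    have h := hentry m n
    rw [hd00] at h
    rw [h]; ring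
  have hrank' : ∀ s t, f s t = c * (f s q * f p t) := by
    intro s t
    rw [hc, eq_inv_mul_iff_mul_eq₀ hpq]
    linear_combination hrank s t
  -- fullness of the family φ (E k k)
  have master : ∀ t : I, ∃ S : Finset I,
      (∀ k, k ∉ S → ∀ m, φ (E k k) m t = 0) ∧
      (∀ k, k ∉ S → ∀ n, φ (E k k) t n = 0) ∧
      (∀ m, (∑ k ∈ S, φ (E k k) m t) = if m = t then 1 else 0) := by
    intro t
    obtain ⟨a, ha_fin, hφa⟩ := hsurj (E t t) (fin_E t t)
    set T := ha_fin.toFinset with hT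
    set S := T.image Prod.fst ∪ T.image Prod.snd with hS
    have hmemS : ∀ m n, a m n ≠ 0 → m ∈ S ∧ n ∈ S := by
      intro m n h
      constructor
      · exact Finset.mem_union_left _
          (Finset.mem_image.mpr ⟨(m, n), ha_fin.mem_toFinset.mpr h, rfl⟩)
      · exact Finset.mem_union_right _
          (Finset.mem_image.mpr ⟨(m, n), ha_fin.mem_toFinset.mpr h, rfl⟩)
    set eS : Matrix I I F := ∑ k ∈ S, E k k with heS
    have heS_fin : IsFinitary eS := fin_sum _ _ (fun k => fin_E k k)
    have heS_apply : ∀ m n, eS m n = if m = n ∧ m ∈ S then 1 else 0 := by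
      intro m n
      rw [heS, Matrix.sum_apply]
      by_cases hmn : m = n
      · subst hmn
        rw [Finset.sum_congr rfl (g := fun k => if m = k then (1 : F) else 0)
            (fun k _ => by by_cases h : m = k <;> simp [E, h])]
        rw [Finset.sum_ite_eq S m (fun _ => (1 : F))]
        simp
      · rw [Finset.sum_eq_zero (fun k _ => by
          simp only [E]
          rw [if_neg]
          rintro ⟨h1, h2⟩
          exact hmn (h1.trans h2.symm))]
        rw [if_neg (by tauto)]
    have h_eSa : matMul eS a = a := by
      funext m n
      rw [matMul_apply, finsum_eq_single _ m]
      · rw [heS_apply]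
        by_cases hm : m ∈ S
        · rw [if_pos ⟨rfl, hm⟩, one_mul]
        · have ha0 : a m n = 0 := by
            by_contra h
            exact hm (hmemS m n h).1
          rw [ha0, mul_zero]
      · intro k hk
        rw [heS_apply, if_neg, zero_mul]
        rintro ⟨h1, -⟩; exact hk h1.symm
    have h_aeS : matMul a eS = a := by
      funext m n
      rw [matMul_apply, finsum_eq_single _ n]
      · rw [heS_apply]
        by_cases hn : n ∈ S
        · rw [if_pos ⟨rfl, hn⟩, mul_one]
        · have ha0 : a m n = 0 := by
            by_contra h
            exact hn (hmemS m n h).2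
          rw [ha0, zero_mul]
      · intro k hk
        rw [heS_apply, if_neg, mul_zero]
        rintro ⟨h1, -⟩; exact hk h1
    set g : Matrix I I F := φ eS with hg
    have hg_col : ∀ m, g m t = if m = t then 1 else 0 := by
      intro m
      have h1 : E t t = matMul g (E t t) := by
        conv_lhs => rw [← hφa, ← h_eSa]
        rw [hmul _ _ heS_fin ha_fin, hφa, hg]
      have h2 := congrFun (congrFun h1 m) t
      rw [matMul_E_right, if_pos rfl] at h2
      rw [← h2]
      simp [E]
    have hg_row : ∀ n, g t n = if n = t then 1 else 0 := by
      intro n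
      have h1 : E t t = matMul (E t t) g := by
        conv_lhs => rw [← hφa, ← h_aeS]
        rw [hmul _ _ ha_fin heS_fin, hφa, hg]
      have h2 := congrFun (congrFun h1 t) n
      rw [matMul_E_left, if_pos rfl] at h2
      rw [← h2]
      simp [E]
    refine ⟨S, ?_, ?_, ?_⟩
    · intro k hk m
      have h0 : matMul (E k k) eS = 0 := by
        funext m' n'
        rw [matMul_E_left]
        by_cases h : m' = k
        · rw [if_pos h, heS_apply, if_neg]
          · rfl
          · rintro ⟨-, h2⟩; exact hk h2
        · rw [if_neg h]; rfl
      have h1 : matMul (φ (E k k)) g = 0 := by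
        rw [hg, ← hmul _ _ (fin_E k k) heS_fin, h0, hφ0]
      have h3 : (∑ᶠ s, φ (E k k) m s * g s t) = φ (E k k) m t := by
        rw [finsum_eq_single _ t]
        · rw [hg_col, if_pos rfl, mul_one]
        · intro s hs; rw [hg_col, if_neg hs, mul_zero]
      have h2 := congrFun (congrFun h1 m) t
      rw [matMul_apply] at h2
      rw [← h3, h2]; rfl
    · intro j hj n
      have h0 : matMul eS (E j j) = 0 := by
        funext m' n'
        rw [matMul_E_right]
        by_cases h : n' = j
        · rw [if_pos h, heS_apply, if_neg]
          · rfl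
          · rintro ⟨h1, h2⟩; exact hj (h1 ▸ h2)
        · rw [if_neg h]; rfl
      have h1 : matMul g (φ (E j j)) = 0 := by
        rw [hg, ← hmul _ _ heS_fin (fin_E j j), h0, hφ0]
      have h3 : (∑ᶠ s, g t s * φ (E j j) s n) = φ (E j j) t n := by
        rw [finsum_eq_single _ t]
        · rw [hg_row, if_pos rfl, one_mul]
        · intro s hs; rw [hg_row, if_neg hs, zero_mul]
      have h2 := congrFun (congrFun h1 t) n
      rw [matMul_apply] at h2
      rw [← h3, h2]; rfl
    · intro m
      have hgs : g = ∑ k ∈ S, φ (E k k) := by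
        rw [hg, heS, phi_sum φ hφ0 hadd S _ (fun k => fin_E k k)]
      have h2 := congrFun (congrFun hgs m) t
      rw [hg_col, Matrix.sum_apply] at h2
      exact h2.symm
  -- the conjugating matrices
  set x : Matrix I I F := fun i k => c * φ (E o i) p k with hx
  set y : Matrix I I F := fun k j => φ (E j o) k q with hy
  have key : ∀ i j m n, φ (E i j) m n = y m i * x j n := by
    intro i j m n
    have hBf : matMul (φ (E i o)) f = φ (E i o) := by
      rw [hf_def, hmulE i o o o, if_pos rfl]
    have hfC : matMul f (φ (E o j)) = φ (E o j) := by
      rw [hf_def, hmulE o o o j, if_pos rfl]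
    have hBC : φ (E i j) = matMul (φ (E i o)) (φ (E o j)) := by
      rw [hmulE i o o j, if_pos rfl]
    have hfinB := hmapsTo _ (fin_E i o)
    have hfinC := hmapsTo _ (fin_E o j)
    have hB : ∀ t, φ (E i o) m t = c * f p t * φ (E i o) m q := by
      intro t
      have hterm : ∀ s, φ (E i o) m s * f s t = (c * f p t) * (φ (E i o) m s * f s q) := by
        intro s
        rw [hrank' s t]
        ring
      conv_lhs => rw [← hBf]
      rw [matMul_apply, finsum_congr hterm,
        ← mul_finsum _ _,
        ← matMul_apply, hBf]
    have hterm2 : ∀ t, φ (E i o) m t * φ (E o j) t n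
        = (c * φ (E i o) m q) * (f p t * φ (E o j) t n) := by
      intro t
      rw [hB t]
      ring
    rw [hBC, matMul_apply, finsum_congr hterm2,
      ← mul_finsum _ _,
      ← matMul_apply, hfC]
    simp only [hx, hy]
    ring
  have hxy : matMul x y = 1 := by
    funext i j
    rw [matMul_apply]
    have hterm : ∀ k, x i k * y k j = c * (φ (E o i) p k * φ (E j o) k q) := by
      intro k
      simp only [hx, hy]
      ring
    rw [finsum_congr hterm,
      ← mul_finsum _ _]
    rw [← matMul_apply, hmulE o i j o]
    by_cases h : i = j
    · subst h
      rw [if_pos rfl, ← hf_def, Matrix.one_apply_eq, hc]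
      exact inv_mul_cancel₀ hpq
    · rw [if_neg h, Matrix.one_apply_ne h]
      simp
  have hyx : matMul y x = 1 := by
    funext m n
    rw [matMul_apply]
    have hterm : ∀ k, y m k * x k n = φ (E k k) m n := fun k => (key k k m n).symm
    rw [finsum_congr hterm]
    obtain ⟨S, hcol, -, hsum⟩ := master n
    have hsupp : (Function.support fun k => φ (E k k) m n) ⊆ ↑S := by
      intro k hk
      by_contra hkS
      exact hk (hcol k (fun h => hkS (Finset.mem_coe.mpr h)) m)
    rw [finsum_eq_finset_sum_of_support_subset _ hsupp, hsum m, Matrix.one_apply]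
  have hrcfx : IsRcf x := by
    constructor
    · intro i
      apply Set.Finite.subset (row_fin (hmapsTo _ (fin_E o i)) p)
      intro k hk
      simp only [Set.mem_setOf_eq, hx] at hk ⊢
      intro h0
      exact hk (by rw [h0, mul_zero])
    · intro k
      obtain ⟨S, hcol, -, -⟩ := master k
      apply Set.Finite.subset S.finite_toSet
      intro i hi
      simp only [Set.mem_setOf_eq, hx] at hi
      by_contra hiS
      apply hi
      have hEoi : φ (E o i) = matMul (φ (E o i)) (φ (E i i)) := by
        rw [hmulE o i i i, if_pos rfl]
      have h00 : φ (E o i) p k = 0 := by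
        rw [hEoi, matMul_apply]
        apply finsum_eq_zero_of_forall_eq_zero
        intro s
        rw [hcol i (fun h => hiS (Finset.mem_coe.mpr h)) s, mul_zero]
      rw [h00, mul_zero]
  have hrcfy : IsRcf y := by
    constructor
    · intro m
      obtain ⟨S, -, hrow, -⟩ := master m
      apply Set.Finite.subset S.finite_toSet
      intro j hj
      simp only [Set.mem_setOf_eq, hy] at hj
      by_contra hjS
      apply hj
      have hEjo : φ (E j o) = matMul (φ (E j j)) (φ (E j o)) := by
        rw [hmulE j j j o, if_pos rfl]
      rw [hEjo, matMul_apply]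
      apply finsum_eq_zero_of_forall_eq_zero
      intro s
      rw [hrow j (fun h => hjS (Finset.mem_coe.mpr h)) s, zero_mul]
    · intro j
      apply Set.Finite.subset (col_fin (hmapsTo _ (fin_E j o)) q)
      intro k hk
      simp only [Set.mem_setOf_eq, hy] at hk ⊢
      exact hk
  refine ⟨x, y, hrcfx, hrcfy, hxy, hyx, ?_⟩
  intro a ha
  funext m n
  set T : Finset (I × I) := ha.toFinset with hT
  have hmemT : ∀ u : I × I, u ∈ T ↔ a u.1 u.2 ≠ 0 := fun u => ha.mem_toFinset
  set T1 := T.image Prod.fst with hT1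
  set T2 := T.image Prod.snd with hT2
  have hdecomp : a = ∑ u ∈ T, a u.1 u.2 • E u.1 u.2 := by
    funext m' n'
    rw [Matrix.sum_apply]
    have hterm : ∀ u ∈ T, (a u.1 u.2 • (E u.1 u.2 : Matrix I I F)) m' n'
        = if u = (m', n') then a m' n' else 0 := by
      intro u _
      by_cases h : u = (m', n')
      · subst h; simp [E]
      · rw [if_neg h, Matrix.smul_apply, smul_eq_mul]
        have hcond : ¬(m' = u.1 ∧ n' = u.2) := by
          rintro ⟨h1, h2⟩
          exact h (Prod.ext_iff.mpr ⟨h1.symm, h2.symm⟩)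
        simp [E, hcond]
    rw [Finset.sum_congr rfl hterm, Finset.sum_ite_eq' T (m', n') (fun _ => a m' n')]
    by_cases h : (m', n') ∈ T
    · rw [if_pos h]
    · rw [if_neg h]
      by_contra h2
      exact h ((hmemT (m', n')).mpr h2)
  have hφdecomp : φ a m n = ∑ u ∈ T, a u.1 u.2 * (y m u.1 * x u.2 n) := by
    conv_lhs => rw [hdecomp]
    rw [phi_sum φ hφ0 hadd T _ (fun u => fin_smul _ (fin_E _ _)), Matrix.sum_apply]
    apply Finset.sum_congr rfl
    intro u _
    rw [hsmul _ _ (fin_E u.1 u.2), Matrix.smul_apply, smul_eq_mul, key u.1 u.2 m n]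
  have hRHS : matMul (matMul y a) x m n
      = ∑ k ∈ T2, (∑ t ∈ T1, y m t * a t k) * x k n := by
    rw [matMul_apply]
    have hsupp2 : (Function.support fun k => matMul y a m k * x k n) ⊆ ↑T2 := by
      intro k hk
      by_contra hkT
      apply hk
      show matMul y a m k * x k n = 0
      have h0 : matMul y a m k = 0 := by
        rw [matMul_apply]
        apply finsum_eq_zero_of_forall_eq_zero
        intro t
        have ha0 : a t k = 0 := by
          by_contra h'
          exact hkT (Finset.mem_coe.mpr (Finset.mem_image.mpr
            ⟨(t, k), (hmemT (t, k)).mpr h', rfl⟩))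
        rw [ha0, mul_zero]
      rw [h0, zero_mul]
    rw [finsum_eq_finset_sum_of_support_subset _ hsupp2]
    apply Finset.sum_congr rfl
    intro k _
    congr 1
    rw [matMul_apply]
    have hsupp1 : (Function.support fun t => y m t * a t k) ⊆ ↑T1 := by
      intro t ht
      have h' : a t k ≠ 0 := right_ne_zero_of_mul ht
      exact Finset.mem_coe.mpr (Finset.mem_image.mpr ⟨(t, k), (hmemT (t, k)).mpr h', rfl⟩)
    rw [finsum_eq_finset_sum_of_support_subset _ hsupp1]
  rw [hφdecomp, hRHS]
  have hsub : T ⊆ T1 ×ˢ T2 := by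
    intro u hu
    rw [Finset.mem_product]
    exact ⟨Finset.mem_image.mpr ⟨u, hu, rfl⟩, Finset.mem_image.mpr ⟨u, hu, rfl⟩⟩
  calc ∑ u ∈ T, a u.1 u.2 * (y m u.1 * x u.2 n)
      = ∑ u ∈ T1 ×ˢ T2, a u.1 u.2 * (y m u.1 * x u.2 n) := by
        apply Finset.sum_subset hsub
        intro u _ hnot
        have : a u.1 u.2 = 0 := by
          by_contra h'
          exact hnot ((hmemT u).mpr h')
        rw [this, zero_mul]
    _ = ∑ i ∈ T1, ∑ k ∈ T2, a i k * (y m i * x k n) := by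
        rw [Finset.sum_product]
    _ = ∑ k ∈ T2, ∑ i ∈ T1, a i k * (y m i * x k n) := Finset.sum_comm
    _ = ∑ k ∈ T2, (∑ t ∈ T1, y m t * a t k) * x k n := by
        apply Finset.sum_congr rfl
        intro k _
        rw [Finset.sum_mul]
        apply Finset.sum_congr rfl
        intro t _
        ring
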